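/- arXiv:2604.17363 — 3 statements merged into one kernel-verified Lean document; each statement's English description precedes it below -/
import Mathlib

section
/- The infimum J₁(2) := inf{∫_ℝ |u'|² dx − (1/2)∫_ℝ u⁴ dx : u ∈ H¹(ℝ), ∫_ℝ u² dx = 1} satisfies J₁(2) ≤ −1/48. -/
open Real MeasureTheory

/-- Membership in H¹(ℝ). -/
def H1 (u : ℝ → ℝ) : Prop :=
  Differentiable ℝ u ∧ MemLp u 2 (volume : Measure ℝ) ∧
    MemLp (deriv u) 2 (volume : Measure ℝ)

/-- The energy functional of `J₁(2)`. -/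
noncomputable def E1 (u : ℝ → ℝ) : ℝ :=
  (∫ x : ℝ, (deriv u x) ^ 2) - (1 / 2) * ∫ x : ℝ, (u x) ^ 4

/-- The variational problem `J₁(2)`. -/
noncomputable def J1 : ℝ :=
  sInf {y : ℝ | ∃ u : ℝ → ℝ, H1 u ∧ (∫ x : ℝ, (u x) ^ 2) = 1 ∧ y = E1 u}

open Set Filter Topology

noncomputable def T (x : ℝ) : ℝ := Real.sinh x / Real.cosh x

lemma hasDerivAt_T (x : ℝ) : HasDerivAt T (1 / Real.cosh x ^ 2) x := by
  have h := (Real.hasDerivAt_sinh x).div (Real.hasDerivAt_cosh x) (Real.cosh_pos x).ne'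
  refine h.congr_deriv (Eq.symm ?_)
  have h1 : Real.cosh x * Real.cosh x - Real.sinh x * Real.sinh x = 1 := by
    have := Real.cosh_sq_sub_sinh_sq x; nlinarith
  rw [h1]

lemma T_eq (x : ℝ) : T x = (Real.exp (2*x) - 1) / (Real.exp (2*x) + 1) := by
  have h1 : Real.exp x > 0 := Real.exp_pos x
  have h2 : Real.exp (2*x) = Real.exp x * Real.exp x := by
    rw [← Real.exp_add]; ring_nf
  unfold T
  rw [Real.sinh_eq, Real.cosh_eq]
  have h3 : Real.exp (-x) = (Real.exp x)⁻¹ := by rw [Real.exp_neg]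
  rw [h2, h3]
  have h4 : Real.exp x + (Real.exp x)⁻¹ > 0 := by positivity
  field_simp

lemma T_atTop : Tendsto T atTop (𝓝 1) := by
  have h : Tendsto (fun x : ℝ => Real.exp (2*x)) atTop atTop :=
    Real.tendsto_exp_atTop.comp (tendsto_id.const_mul_atTop (by norm_num))
  have h2 : Tendsto (fun x : ℝ => (Real.exp (2*x) - 1) / (Real.exp (2*x) + 1)) atTop (𝓝 1) := by
    have : Tendsto (fun x : ℝ => 1 - 2 / (Real.exp (2*x) + 1)) atTop (𝓝 (1 - 0)) := by
      apply tendsto_const_nhds.sub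
      apply Tendsto.div_atTop tendsto_const_nhds (h.atTop_add tendsto_const_nhds)
    simp only [sub_zero] at this
    apply this.congr
    intro x
    have : Real.exp (2*x) + 1 > 0 := by positivity
    field_simp
    ring
  exact h2.congr (fun x => (T_eq x).symm)

lemma T_atBot : Tendsto T atBot (𝓝 (-1)) := by
  have h : Tendsto (fun x : ℝ => Real.exp (2*x)) atBot (𝓝 0) :=
    Real.tendsto_exp_atBot.comp ((tendsto_const_mul_atBot_of_pos (by norm_num : (0:ℝ) < 2)).2 tendsto_id)
  have h2 : Tendsto (fun x : ℝ => (Real.exp (2*x) - 1) / (Real.exp (2*x) + 1)) atBot (𝓝 ((0-1)/(0+1))) := by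
    exact ((h.sub tendsto_const_nhds).div (h.add tendsto_const_nhds) (by norm_num))
  norm_num at h2
  exact h2.congr (fun x => (T_eq x).symm)

noncomputable def uu (x : ℝ) : ℝ := Real.sqrt 2 / (4 * Real.cosh (x/4))

noncomputable def duu (x : ℝ) : ℝ :=
  -(Real.sqrt 2) * Real.sinh (x/4) / (16 * Real.cosh (x/4)^2)

lemma cosh_q_pos (x : ℝ) : 0 < Real.cosh (x/4) := Real.cosh_pos _

lemma hasDerivAt_inner (x : ℝ) :
    HasDerivAt (fun y : ℝ => Real.cosh (y/4)) (Real.sinh (x/4) * (1/4)) x := by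
  have h1 : HasDerivAt (fun y : ℝ => y/4) (1/4 : ℝ) x := (hasDerivAt_id x).div_const 4
  exact (Real.hasDerivAt_cosh (x/4)).comp x h1

lemma hasDerivAt_uu (x : ℝ) : HasDerivAt uu (duu x) x := by
  have hc := (cosh_q_pos x).ne'
  have h4 : (4 : ℝ) * Real.cosh (x/4) ≠ 0 := by positivity
  have h := (hasDerivAt_const x (Real.sqrt 2)).div
    ((hasDerivAt_inner x).const_mul 4) h4
  unfold duu
  refine h.congr_deriv (Eq.symm ?_)
  rw [div_eq_div_iff (by positivity) (by positivity)]
  ring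

lemma hasDerivAt_T4 (x : ℝ) :
    HasDerivAt (fun y : ℝ => T (y/4)) (1 / Real.cosh (x/4) ^ 2 * (1/4)) x :=
  by have h := (hasDerivAt_T (x/4)).comp x ((hasDerivAt_id x).div_const 4); exact h

lemma T4_atTop : Tendsto (fun y : ℝ => T (y/4)) atTop (𝓝 1) :=
  T_atTop.comp (tendsto_id.atTop_div_const (by norm_num))

lemma T4_atBot : Tendsto (fun y : ℝ => T (y/4)) atBot (𝓝 (-1)) :=
  T_atBot.comp (tendsto_id.atBot_div_const (by norm_num))

lemma integral_even_deriv {F g : ℝ → ℝ} (hF : ∀ x, HasDerivAt F (g x) x)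
    (hg0 : ∀ x, 0 ≤ g x) (heven : ∀ x, g (-x) = g x) {m n : ℝ}
    (hbot : Tendsto F atBot (𝓝 m)) (htop : Tendsto F atTop (𝓝 n)) :
    Integrable g ∧ ∫ x, g x = n - m := by
  have hIoi : IntegrableOn g (Ioi 0) :=
    integrableOn_Ioi_deriv_of_nonneg' (fun x _ => hF x) (fun x _ => hg0 x) htop
  have hIci : IntegrableOn g (Ici 0) := Iff.mpr integrableOn_Ici_iff_integrableOn_Ioi hIoi
  have hIic : IntegrableOn g (Iic 0) := by
    rw [← (Measure.measurePreserving_neg (volume : Measure ℝ)).integrableOn_comp_preimage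
        (Homeomorph.neg ℝ).measurableEmbedding]
    have h1 : (g ∘ Neg.neg : ℝ → ℝ) = g := funext fun x => heven x
    have h2 : (Neg.neg ⁻¹' (Iic (0:ℝ))) = Ici 0 := by
      ext x; simp
    rw [h1, h2]
    exact hIci
  have hint : Integrable g := by
    rw [← integrableOn_univ, ← Set.Iic_union_Ioi (a := (0:ℝ)), integrableOn_union]
    exact ⟨hIic, hIoi⟩
  exact ⟨hint, integral_of_hasDerivAt_of_tendsto hF hint hbot htop⟩

lemma sqrt2_sq : Real.sqrt 2 ^ 2 = 2 := Real.sq_sqrt (by norm_num)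

lemma hF2 (x : ℝ) : HasDerivAt (fun y : ℝ => (1/2) * T (y/4)) (uu x ^ 2) x := by
  have h := (hasDerivAt_T4 x).const_mul (1/2 : ℝ)
  refine h.congr_deriv (Eq.symm ?_)
  unfold uu
  rw [div_pow, mul_pow, sqrt2_sq]
  have hc := (cosh_q_pos x).ne'
  field_simp
  ring

lemma hFd (x : ℝ) : HasDerivAt (fun y : ℝ => (1/96) * T (y/4) ^ 3) (duu x ^ 2) x := by
  have h := ((hasDerivAt_T4 x).pow 3).const_mul (1/96 : ℝ)
  refine h.congr_deriv (Eq.symm ?_)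
  unfold duu T
  have hc := (cosh_q_pos x).ne'
  rw [div_pow, mul_pow, neg_pow, mul_pow, sqrt2_sq]
  norm_num
  field_simp
  ring

lemma hF4 (x : ℝ) :
    HasDerivAt (fun y : ℝ => (1/16) * T (y/4) - (1/48) * T (y/4) ^ 3) (uu x ^ 4) x := by
  have h := ((hasDerivAt_T4 x).const_mul (1/16 : ℝ)).sub
    (((hasDerivAt_T4 x).pow 3).const_mul (1/48 : ℝ))
  refine h.congr_deriv (Eq.symm ?_)
  unfold uu T
  have hc := (cosh_q_pos x).ne'
  have hid : Real.cosh (x/4) ^ 2 - Real.sinh (x/4) ^ 2 = 1 := Real.cosh_sq_sub_sinh_sq _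
  rw [div_pow, mul_pow, show Real.sqrt 2 ^ 4 = 4 by
    rw [show (4:ℕ) = 2*2 from rfl, pow_mul, sqrt2_sq]; norm_num]
  norm_num
  field_simp
  linear_combination (-12288) * hid

lemma int2 : Integrable (fun x => uu x ^ 2) ∧ ∫ x, uu x ^ 2 = 1 := by
  have h := integral_even_deriv hF2 (fun x => sq_nonneg _)
    (fun x => by unfold uu; rw [neg_div, Real.cosh_neg])
    ((T4_atBot.const_mul (1/2 : ℝ))) ((T4_atTop.const_mul (1/2 : ℝ)))
  refine ⟨h.1, ?_⟩
  rw [h.2]; norm_num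

lemma intd : Integrable (fun x => duu x ^ 2) ∧ ∫ x, duu x ^ 2 = 1/48 := by
  have h := integral_even_deriv hFd (fun x => sq_nonneg _)
    (fun x => by unfold duu; rw [neg_div, Real.cosh_neg, Real.sinh_neg]; ring)
    (((T4_atBot.pow 3).const_mul (1/96 : ℝ))) (((T4_atTop.pow 3).const_mul (1/96 : ℝ)))
  refine ⟨h.1, ?_⟩
  rw [h.2]; norm_num

lemma int4 : Integrable (fun x => uu x ^ 4) ∧ ∫ x, uu x ^ 4 = 1/12 := by
  have hb := (T4_atBot.const_mul (1/16 : ℝ)).sub ((T4_atBot.pow 3).const_mul (1/48 : ℝ))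
  have ht := (T4_atTop.const_mul (1/16 : ℝ)).sub ((T4_atTop.pow 3).const_mul (1/48 : ℝ))
  have h := integral_even_deriv hF4 (fun x => by positivity)
    (fun x => by unfold uu; rw [neg_div, Real.cosh_neg]) hb ht
  refine ⟨h.1, ?_⟩
  rw [h.2]; norm_num

lemma cont_uu : Continuous uu := by
  unfold uu
  exact continuous_const.div (continuous_const.mul (Real.continuous_cosh.comp
    (continuous_id.div_const 4))) (fun x => by positivity)

lemma cont_duu : Continuous duu := by
  unfold duu
  exact (continuous_const.mul (Real.continuous_sinh.comp (continuous_id.div_const 4))).div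
    (continuous_const.mul ((Real.continuous_cosh.comp (continuous_id.div_const 4)).pow 2))
    (fun x => by positivity)

lemma deriv_uu : deriv uu = duu := funext fun x => (hasDerivAt_uu x).deriv

lemma bdd_lower {u : ℝ → ℝ} (hu : H1 u) (hn : (∫ x : ℝ, (u x) ^ 2) = 1) : -1 ≤ E1 u := by
  obtain ⟨hdiff, hu2, hdu2⟩ := hu
  have hu2int : Integrable (fun x => u x ^ 2) := (memLp_two_iff_integrable_sq hu2.1).mp hu2
  have hdu2int : Integrable (fun x => deriv u x ^ 2) :=
    (memLp_two_iff_integrable_sq hdu2.1).mp hdu2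
  set D := ∫ x : ℝ, deriv u x ^ 2 with hD
  have hD0 : 0 ≤ D := integral_nonneg fun x => sq_nonneg _
  by_cases hQ : Integrable (fun x : ℝ => u x ^ 4)
  · set f' : ℝ → ℝ := fun x => 2 * u x * deriv u x with hf'def
    have hfderiv : ∀ x, HasDerivAt (fun y => u y ^ 2) (f' x) x := fun x => by
      exact (((hdiff x).hasDerivAt).pow 2).congr_deriv (by simp [f'])
    have hmeas : AEStronglyMeasurable f' volume :=
      ((hdiff.continuous.aestronglyMeasurable).const_mul 2).mul hdu2.1
    have hbound : ∀ x, ‖f' x‖ ≤ u x ^ 2 + deriv u x ^ 2 := by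
      intro x
      rw [Real.norm_eq_abs]
      have hfx : f' x = 2 * u x * deriv u x := rfl
      rw [hfx]
      refine abs_le.mpr ⟨?_, ?_⟩
      · nlinarith [sq_nonneg (u x + deriv u x)]
      · nlinarith [sq_nonneg (u x - deriv u x)]
    have hint' : Integrable f' :=
      Integrable.mono' (hu2int.add hdu2int) hmeas (Filter.Eventually.of_forall hbound)
    have htend : Filter.Tendsto (fun x => u x ^ 2) Filter.atBot (nhds 0) :=
      tendsto_zero_of_hasDerivAt_of_integrableOn_Iic (a := 0) (fun x _ => hfderiv x)
        hint'.integrableOn hu2int.integrableOn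
    have habs : Integrable (fun x => |f' x|) := hint'.abs
    have hM : ∫ x : ℝ, |f' x| ≤ 1 + D := by
      rw [← hn]
      calc ∫ x : ℝ, |f' x| ≤ ∫ x : ℝ, (u x ^ 2 + deriv u x ^ 2) := by
            refine integral_mono habs (hu2int.add hdu2int) fun x => ?_
            simpa [Real.norm_eq_abs] using hbound x
        _ = (∫ x : ℝ, u x ^ 2) + D := integral_add hu2int hdu2int
    have hsup : ∀ x, u x ^ 2 ≤ 1 + D := by
      intro x
      have heq : ∫ y in Set.Iic x, f' y = u x ^ 2 - 0 :=
        integral_Iic_of_hasDerivAt_of_tendsto' (fun y _ => hfderiv y)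
          hint'.integrableOn htend
      rw [sub_zero] at heq
      calc u x ^ 2 = ∫ y in Set.Iic x, f' y := heq.symm
        _ ≤ ∫ y in Set.Iic x, |f' y| :=
            integral_mono hint'.integrableOn habs.integrableOn fun y => le_abs_self _
        _ ≤ ∫ y : ℝ, |f' y| :=
            setIntegral_le_integral habs (Filter.Eventually.of_forall fun y => abs_nonneg _)
        _ ≤ 1 + D := hM
    have hQle : ∫ x : ℝ, u x ^ 4 ≤ 1 + D := by
      calc ∫ x : ℝ, u x ^ 4 ≤ ∫ x : ℝ, (1 + D) * u x ^ 2 := by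
            refine integral_mono hQ (hu2int.const_mul _) fun x => ?_
            have h1 := hsup x
            nlinarith [sq_nonneg (u x)]
        _ = (1 + D) * ∫ x : ℝ, u x ^ 2 := integral_const_mul _ _
        _ = 1 + D := by rw [hn, mul_one]
    unfold E1
    rw [← hD]
    linarith
  · unfold E1
    rw [← hD, integral_undef hQ]
    linarith

theorem stmt5 : J1 ≤ -(1 / 48) := by
  have hH1 : H1 uu := by
    refine ⟨fun x => (hasDerivAt_uu x).differentiableAt, ?_, ?_⟩
    · exact (memLp_two_iff_integrable_sq cont_uu.aestronglyMeasurable).mpr int2.1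
    · rw [deriv_uu]
      exact (memLp_two_iff_integrable_sq cont_duu.aestronglyMeasurable).mpr intd.1
  have hE : E1 uu = -(1 / 48) := by
    unfold E1
    rw [deriv_uu, intd.2, int4.2]
    norm_num
  have hmem : -(1 / 48 : ℝ) ∈
      {y : ℝ | ∃ u : ℝ → ℝ, H1 u ∧ (∫ x : ℝ, (u x) ^ 2) = 1 ∧ y = E1 u} :=
    ⟨uu, hH1, int2.2, hE.symm⟩
  exact csInf_le ⟨-1, fun y hy => by
    obtain ⟨u, hu, hn, rfl⟩ := hy; exact bdd_lower hu hn⟩ hmem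
end

section
/- For any real numbers α < β and any f ∈ C¹([α,β]), the interpolation inequality ‖f‖²_{L^∞[α,β]} ≤ 2‖f‖_{L²[α,β]}·‖f'‖_{L²[α,β]} + (2/(β−α))‖f‖²_{L²[α,β]} holds. -/
open Real MeasureTheory intervalIntegral

theorem stmt6 (α β : ℝ) (hab : α < β) (f : ℝ → ℝ)
    (hf : ContDiffOn ℝ 1 f (Set.Icc α β)) :
    ∀ x ∈ Set.Icc α β,
      (f x) ^ 2 ≤
        2 * Real.sqrt (∫ t in α..β, (f t) ^ 2) *
            Real.sqrt (∫ t in α..β, (deriv f t) ^ 2) +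
          (2 / (β - α)) * ∫ t in α..β, (f t) ^ 2 := by
  intro x hx
  have hIu : Set.uIcc α β = Set.Icc α β := Set.uIcc_of_le hab.le
  have hfc : ContinuousOn f (Set.Icc α β) := hf.continuousOn
  set g := derivWithin f (Set.Icc α β) with hgdef
  have hgc : ContinuousOn g (Set.Icc α β) :=
    hf.continuousOn_derivWithin (uniqueDiffOn_Icc hab) le_rfl
  have hdg : ∀ t ∈ Set.Ioo α β, HasDerivAt f (g t) t := by
    intro t ht
    have hmem : Set.Icc α β ∈ nhds t := Icc_mem_nhds ht.1 ht.2
    have hda : DifferentiableAt ℝ f t :=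
      (hf.differentiableOn one_ne_zero t (Set.Ioo_subset_Icc_self ht)).differentiableAt hmem
    have hd : HasDerivAt f (deriv f t) t := hda.hasDerivAt
    rwa [hgdef, derivWithin_of_mem_nhds hmem]
  have hderiv_eq : ∀ t ∈ Set.Ioo α β, deriv f t = g t := fun t ht => (hdg t ht).deriv
  -- integrability
  have hf2int : IntervalIntegrable (fun t => (f t) ^ 2) volume α β := by
    apply ContinuousOn.intervalIntegrable
    rw [hIu]; exact hfc.pow 2
  have hg2int : IntervalIntegrable (fun t => (g t) ^ 2) volume α β := by
    apply ContinuousOn.intervalIntegrable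
    rw [hIu]; exact hgc.pow 2
  have hfgint : IntervalIntegrable (fun t => 2 * (|f t| * |g t|)) volume α β := by
    apply ContinuousOn.intervalIntegrable
    rw [hIu]; exact (continuousOn_const.mul (hfc.abs.mul hgc.abs))
  -- the integral of (deriv f)^2 equals that of g^2
  have hne : ∀ᵐ t ∂(volume : Measure ℝ), t ≠ β := by
    have h0 : (volume : Measure ℝ) {β} = 0 := measure_singleton β
    have := measure_eq_zero_iff_ae_notMem.mp h0
    filter_upwards [this] with t ht
    simpa using ht
  have hderiv2_eq : (∫ t in α..β, (deriv f t) ^ 2) = ∫ t in α..β, (g t) ^ 2 := by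
    apply intervalIntegral.integral_congr_ae
    filter_upwards [hne] with t htne ht
    rw [Set.uIoc_of_le hab.le] at ht
    have : t ∈ Set.Ioo α β := ⟨ht.1, lt_of_le_of_ne ht.2 htne⟩
    rw [hderiv_eq t this]
  -- FTC for f^2
  have key : ∀ a b, a ∈ Set.Icc α β → b ∈ Set.Icc α β → a ≤ b →
      f b ^ 2 - f a ^ 2 = ∫ t in a..b, 2 * f t * g t := by
    intro a b ha hb hle
    have hsub : Set.Icc a b ⊆ Set.Icc α β := Set.Icc_subset_Icc ha.1 hb.2
    refine (intervalIntegral.integral_eq_sub_of_hasDeriv_right_of_le hle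
      ((hfc.mono hsub).pow 2) (fun t ht => ?_) ?_).symm
    · have ht' : t ∈ Set.Ioo α β := ⟨lt_of_le_of_lt ha.1 ht.1, lt_of_lt_of_le ht.2 hb.2⟩
      have := (hdg t ht').pow 2
      simp only [Nat.cast_ofNat, pow_one] at this
      have h2 : HasDerivAt (fun y => f y ^ 2) (2 * f t * g t) t := by
        show HasDerivAt (f ^ 2) _ t
        rw [show 2 * f t * g t = 2 * f t ^ (2 - 1) * g t by norm_num]; exact this
      exact h2.hasDerivWithinAt
    · apply ContinuousOn.intervalIntegrable
      rw [Set.uIcc_of_le hle]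
      exact ((continuousOn_const.mul (hfc.mono hsub)).mul (hgc.mono hsub))
  -- bound on the variation
  set J : ℝ := ∫ t in α..β, |f t| * |g t| with hJdef
  have hvar : ∀ a b, a ∈ Set.Icc α β → b ∈ Set.Icc α β → a ≤ b →
      |f b ^ 2 - f a ^ 2| ≤ 2 * J := by
    intro a b ha hb hle
    rw [key a b ha hb hle]
    calc |∫ t in a..b, 2 * f t * g t|
        ≤ ∫ t in a..b, |2 * f t * g t| := intervalIntegral.abs_integral_le_integral_abs hle
      _ = ∫ t in a..b, 2 * (|f t| * |g t|) := by
          apply intervalIntegral.integral_congr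
          intro t _
          simp [abs_mul, abs_two, mul_assoc]
      _ ≤ ∫ t in α..β, 2 * (|f t| * |g t|) := by
          apply intervalIntegral.integral_mono_interval ha.1 hle hb.2 _ hfgint
          filter_upwards with t
          positivity
      _ = 2 * J := by rw [hJdef, ← intervalIntegral.integral_const_mul]
  -- choice of minimizing point
  obtain ⟨y₀, hy₀I, hy₀min⟩ :=
    isCompact_Icc.exists_isMinOn (Set.nonempty_Icc.mpr hab.le) (hfc.pow 2)
  have hmin : (β - α) * f y₀ ^ 2 ≤ ∫ t in α..β, f t ^ 2 := by
    have := intervalIntegral.integral_mono_on hab.le intervalIntegrable_const hf2int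
      (fun t ht => hy₀min ht)
    simpa [smul_eq_mul, mul_comm] using this
  -- Cauchy–Schwarz
  have hfint2 : (0:ℝ) ≤ ∫ t in α..β, f t ^ 2 :=
    intervalIntegral.integral_nonneg hab.le (fun t _ => sq_nonneg _)
  have hgint2 : (0:ℝ) ≤ ∫ t in α..β, g t ^ 2 :=
    intervalIntegral.integral_nonneg hab.le (fun t _ => sq_nonneg _)
  have hCS : J ≤ Real.sqrt (∫ t in α..β, f t ^ 2) * Real.sqrt (∫ t in α..β, g t ^ 2) := by
    set μ : Measure ℝ := volume.restrict (Set.Ioc α β) with hμ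
    haveI : IsFiniteMeasure μ := by
      constructor
      rw [hμ, Measure.restrict_apply_univ]
      exact measure_Ioc_lt_top
    have hpq : Real.HolderConjugate 2 2 := by constructor <;> norm_num
    have hfm : AEStronglyMeasurable f μ :=
      (hfc.mono Set.Ioc_subset_Icc_self).aestronglyMeasurable measurableSet_Ioc
    have hgm : AEStronglyMeasurable g μ :=
      (hgc.mono Set.Ioc_subset_Icc_self).aestronglyMeasurable measurableSet_Ioc
    obtain ⟨Cf, hCf⟩ := isCompact_Icc.exists_bound_of_continuousOn hfc
    obtain ⟨Cg, hCg⟩ := isCompact_Icc.exists_bound_of_continuousOn hgc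
    have hfLp : MemLp f (ENNReal.ofReal 2) μ := by
      apply MemLp.of_bound hfm Cf
      rw [hμ]
      exact (ae_restrict_iff' measurableSet_Ioc).mpr
        (Filter.Eventually.of_forall fun t ht => hCf t (Set.Ioc_subset_Icc_self ht))
    have hgLp : MemLp g (ENNReal.ofReal 2) μ := by
      apply MemLp.of_bound hgm Cg
      rw [hμ]
      exact (ae_restrict_iff' measurableSet_Ioc).mpr
        (Filter.Eventually.of_forall fun t ht => hCg t (Set.Ioc_subset_Icc_self ht))
    have := MeasureTheory.integral_mul_norm_le_Lp_mul_Lq hpq hfLp hgLp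
    have hl : J = ∫ a, ‖f a‖ * ‖g a‖ ∂μ := by
      rw [hJdef, intervalIntegral.integral_of_le hab.le]
      simp [Real.norm_eq_abs, hμ]
    have hr1 : (∫ a, ‖f a‖ ^ (2:ℝ) ∂μ) = ∫ t in α..β, f t ^ 2 := by
      rw [intervalIntegral.integral_of_le hab.le]
      apply MeasureTheory.integral_congr_ae
      filter_upwards with t
      rw [show ((2:ℝ)) = ((2:ℕ):ℝ) by norm_num, Real.rpow_natCast, Real.norm_eq_abs, sq_abs]
    have hr2 : (∫ a, ‖g a‖ ^ (2:ℝ) ∂μ) = ∫ t in α..β, g t ^ 2 := by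
      rw [intervalIntegral.integral_of_le hab.le]
      apply MeasureTheory.integral_congr_ae
      filter_upwards with t
      rw [show ((2:ℝ)) = ((2:ℕ):ℝ) by norm_num, Real.rpow_natCast, Real.norm_eq_abs, sq_abs]
    rw [hl]
    calc (∫ a, ‖f a‖ * ‖g a‖ ∂μ)
        ≤ (∫ a, ‖f a‖ ^ (2:ℝ) ∂μ) ^ (1/2:ℝ) * (∫ a, ‖g a‖ ^ (2:ℝ) ∂μ) ^ (1/2:ℝ) := this
      _ = Real.sqrt (∫ t in α..β, f t ^ 2) * Real.sqrt (∫ t in α..β, g t ^ 2) := by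
          rw [hr1, hr2, ← Real.sqrt_eq_rpow, ← Real.sqrt_eq_rpow]
  -- conclude
  have h1 : f x ^ 2 ≤ f y₀ ^ 2 + 2 * J := by
    have habs : |f x ^ 2 - f y₀ ^ 2| ≤ 2 * J := by
      rcases le_total y₀ x with h | h
      · exact hvar y₀ x hy₀I hx h
      · rw [abs_sub_comm]; exact hvar x y₀ hx hy₀I h
    have := (le_abs_self (f x ^ 2 - f y₀ ^ 2)).trans habs
    linarith
  have h2 : f y₀ ^ 2 ≤ (2 / (β - α)) * ∫ t in α..β, f t ^ 2 := by
    rw [div_mul_eq_mul_div, le_div_iff₀ (by linarith)]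
    nlinarith
  rw [hderiv2_eq]
  calc f x ^ 2 ≤ f y₀ ^ 2 + 2 * J := h1
    _ ≤ (2 / (β - α)) * (∫ t in α..β, f t ^ 2) + 2 * J := by linarith
    _ ≤ (2 / (β - α)) * (∫ t in α..β, f t ^ 2) +
        2 * (Real.sqrt (∫ t in α..β, f t ^ 2) * Real.sqrt (∫ t in α..β, g t ^ 2)) := by
          linarith
    _ = 2 * Real.sqrt (∫ t in α..β, f t ^ 2) * Real.sqrt (∫ t in α..β, g t ^ 2) +
        (2 / (β - α)) * ∫ t in α..β, f t ^ 2 := by ring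
end

section
/- For any a ≠ 0 and x₀ ∈ ℝ, the function u(x) = √2·a/(e^{−(x−x₀)/4} + 4a²·e^{(x−x₀)/4}) is a solution of the equation −u'' − u³ = −(1/16)u on ℝ. -/
open Real

theorem stmt14 (a x₀ : ℝ) (ha : a ≠ 0) :
    let u : ℝ → ℝ := fun x =>
      Real.sqrt 2 * a /
        (Real.exp (-((x - x₀) / 4)) + 4 * a ^ 2 * Real.exp ((x - x₀) / 4))
    ∀ x : ℝ, -deriv (deriv u) x - (u x) ^ 3 = -(1 / 16) * u x := by
  intro u
  have h2 : Real.sqrt 2 ^ 2 = 2 := Real.sq_sqrt (by norm_num)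
  set c := Real.sqrt 2 * a with hc
  set d : ℝ → ℝ := fun x => Real.exp (-((x - x₀) / 4)) + 4 * a ^ 2 * Real.exp ((x - x₀) / 4) with hdd
  set d1 : ℝ → ℝ := fun x => Real.exp (-((x - x₀) / 4)) * -(1/4) + 4 * a ^ 2 * (Real.exp ((x - x₀) / 4) * (1/4)) with hd1
  set d2 : ℝ → ℝ := fun x => (Real.exp (-((x - x₀) / 4)) * -(1/4)) * -(1/4) + 4 * a ^ 2 * ((Real.exp ((x - x₀) / 4) * (1/4)) * (1/4)) with hd2
  have hne : ∀ x, d x ≠ 0 := by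
    intro x
    have := Real.exp_pos (-((x - x₀)/4))
    have := Real.exp_pos ((x - x₀)/4)
    positivity
  have ht : ∀ x, HasDerivAt (fun x => (x - x₀) / 4) (1/4) x := fun x => by
    simpa using ((hasDerivAt_id x).sub_const x₀).div_const 4
  have htn : ∀ x, HasDerivAt (fun x => -((x - x₀) / 4)) (-(1/4)) x := fun x => (ht x).neg
  have he1 : ∀ x, HasDerivAt (fun x => Real.exp (-((x - x₀) / 4))) (Real.exp (-((x - x₀)/4)) * -(1/4)) x := fun x => (htn x).exp
  have he2 : ∀ x, HasDerivAt (fun x => Real.exp ((x - x₀) / 4)) (Real.exp ((x - x₀)/4) * (1/4)) x := fun x => (ht x).exp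
  have hd : ∀ x, HasDerivAt d (d1 x) x := fun x =>
    (he1 x).add ((he2 x).const_mul (4 * a ^ 2))
  have hd' : ∀ x, HasDerivAt d1 (d2 x) x := fun x =>
    ((he1 x).mul_const (-(1/4))).add (((he2 x).mul_const (1/4)).const_mul (4 * a ^ 2))
  have hu : ∀ x, HasDerivAt u ((0 * d x - c * d1 x) / (d x) ^ 2) x := fun x =>
    (hasDerivAt_const x c).div (hd x) (hne x)
  have hu' : deriv u = fun x => (0 * d x - c * d1 x) / (d x) ^ 2 := funext fun x => (hu x).deriv
  intro x
  have hn : HasDerivAt (fun x => 0 * d x - c * d1 x) (0 * d1 x - c * d2 x) x :=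
    ((hd x).const_mul 0).sub ((hd' x).const_mul c)
  have hden : HasDerivAt (fun x => (d x) ^ 2) (2 * d x ^ 1 * d1 x) x := by
    simpa using (hd x).fun_pow 2
  have hsq : (d x) ^ 2 ≠ 0 := pow_ne_zero 2 (hne x)
  have h2nd : deriv (deriv u) x =
      ((0 * d1 x - c * d2 x) * (d x) ^ 2 - (0 * d x - c * d1 x) * (2 * d x ^ 1 * d1 x)) / ((d x) ^ 2) ^ 2 := by
    rw [hu']
    exact (hn.div hden hsq).deriv
  rw [h2nd]
  show _ - (c / d x) ^ 3 = -(1/16) * (c / d x)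
  have hE : Real.exp (-((x - x₀) / 4)) = (Real.exp ((x - x₀) / 4))⁻¹ := by
    rw [Real.exp_neg]
  have hEne : Real.exp ((x - x₀) / 4) ≠ 0 := (Real.exp_pos _).ne'
  simp only [hdd, hd1, hd2, hE] at *
  field_simp
  ring_nf
  rw [show c ^ 3 = 2 * a ^ 2 * c from by rw [hc, mul_pow, show Real.sqrt 2 ^ 3 = 2 * Real.sqrt 2 from by rw [pow_succ, h2]]; ring]
  ring
end
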